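/- Let $m \ge 5$ be an odd integer and let $\boldsymbol{\mu}_m$ act on $\mathbb{C}[y_2, y_4]$ with weights $\operatorname{wt}(y_2) = m-2$, $\operatorname{wt}(y_4) = 1$. Then for any two invariant polynomials $\phi_1, \phi_2 \in \mathbb{C}[y_2, y_4]^{\boldsymbol{\mu}_m}$, the 2-form $\mathrm{d}\phi_1 \wedge \mathrm{d}\phi_2$ lies in $\bigl((y_2, y_4) y_4 + (y_2, y_4) y_2^{(m-1)/2}\bigr)\, \mathrm{d} y_2 \wedge \mathrm{d} y_4$, where $(y_2, y_4)$ denotes the maximal ideal generated by $y_2$ and $y_4$. -/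

import Mathlib

open MvPolynomial


private lemma mono2 (s : Fin 2 →₀ ℕ) (a : ℂ) :
    (monomial s a : MvPolynomial (Fin 2) ℂ) = C a * X 0 ^ s 0 * X 1 ^ s 1 := by
  rw [monomial_eq, Finsupp.prod_fintype _ _ (fun i => by simp), Fin.prod_univ_two, mul_assoc]

private lemma aeval_scale (r : Fin 2 → ℂ) (s : Fin 2 →₀ ℕ) (a : ℂ) :
    aeval (fun i => C (r i) * X i) (monomial s a)
      = monomial s (a * ∏ i, r i ^ s i) := by
  rw [aeval_monomial, Finsupp.prod_fintype _ _ (fun i => by simp), Fin.prod_univ_two,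
    mono2, Fin.prod_univ_two, algebraMap_eq, mul_pow, mul_pow, map_mul, map_mul,
    map_pow, map_pow]
  ring

private lemma support_dvd (m : ℕ) (ζ : ℂ) (hζ : IsPrimitiveRoot ζ m)
    (φ : MvPolynomial (Fin 2) ℂ)
    (h : aeval (fun i : Fin 2 =>
        (C (ζ ^ (if i = 0 then m - 2 else 1)) * X i : MvPolynomial (Fin 2) ℂ)) φ = φ)
    (d : Fin 2 →₀ ℕ) (hd : d ∈ φ.support) : m ∣ (m - 2) * d 0 + d 1 := by
  set r : Fin 2 → ℂ := fun i => ζ ^ (if i = 0 then m - 2 else 1) with hr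
  have key : coeff d (aeval (fun i : Fin 2 =>
      (C (r i) * X i : MvPolynomial (Fin 2) ℂ)) φ)
      = ζ ^ ((m - 2) * d 0 + d 1) * coeff d φ := by
    conv_lhs => rw [φ.as_sum, map_sum, coeff_sum]
    have : ∀ v ∈ φ.support, coeff d (aeval (fun i : Fin 2 =>
        (C (r i) * X i : MvPolynomial (Fin 2) ℂ)) (monomial v (coeff v φ)))
        = if v = d then ζ ^ ((m - 2) * d 0 + d 1) * coeff d φ else 0 := by
      intro v _
      rw [aeval_scale, coeff_monomial]
      split
      · next hv =>
        subst hv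
        rw [Fin.prod_univ_two]
        simp only [hr]
        norm_num
        rw [pow_add, pow_mul]
        ring
      · rfl
    rw [Finset.sum_congr rfl this, Finset.sum_ite_eq' _ d, if_pos hd]
  rw [h] at key
  have hne : coeff d φ ≠ 0 := mem_support_iff.mp hd
  have hone : ζ ^ ((m - 2) * d 0 + d 1) = 1 :=
    (mul_right_cancel₀ hne ((one_mul _).trans key)).symm
  exact (hζ.pow_eq_one_iff_dvd _).mp hone

private lemma powXX_mem (m : ℕ) (hm : 5 ≤ m) (e f : ℕ)
    (hef : 2 ≤ f ∨ (1 ≤ e ∧ 1 ≤ f) ∨ (m + 1) / 2 ≤ e) :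
    (X 0 : MvPolynomial (Fin 2) ℂ) ^ e * X 1 ^ f ∈
      Ideal.span ({X 0 * X 1, X 1 ^ 2, X 0 ^ ((m - 1) / 2) * X 1, X 0 ^ ((m + 1) / 2)} :
        Set (MvPolynomial (Fin 2) ℂ)) := by
  rcases hef with hf | ⟨he, hf⟩ | he
  · obtain ⟨f', rfl⟩ := Nat.exists_eq_add_of_le hf
    have heq : (X 0 : MvPolynomial (Fin 2) ℂ) ^ e * X 1 ^ (2 + f')
        = (X 0 ^ e * X 1 ^ f') * X 1 ^ 2 := by ring
    rw [heq]
    exact Ideal.mul_mem_left _ _ (Ideal.subset_span (by simp))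
  · obtain ⟨e', rfl⟩ := Nat.exists_eq_add_of_le he
    obtain ⟨f', rfl⟩ := Nat.exists_eq_add_of_le hf
    have heq : (X 0 : MvPolynomial (Fin 2) ℂ) ^ (1 + e') * X 1 ^ (1 + f')
        = (X 0 ^ e' * X 1 ^ f') * (X 0 * X 1) := by ring
    rw [heq]
    exact Ideal.mul_mem_left _ _ (Ideal.subset_span (by simp))
  · obtain ⟨e', rfl⟩ := Nat.exists_eq_add_of_le he
    have heq : (X 0 : MvPolynomial (Fin 2) ℂ) ^ ((m + 1) / 2 + e') * X 1 ^ f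
        = (X 0 ^ e' * X 1 ^ f) * X 0 ^ ((m + 1) / 2) := by rw [pow_add]; ring
    rw [heq]
    exact Ideal.mul_mem_left _ _ (Ideal.subset_span (by simp))

private lemma exp_mem (m : ℕ) (hm : 5 ≤ m) (hodd : Odd m)
    (u0 u1 v0 v1 : ℕ) (hu0 : 1 ≤ u0) (hv1 : 1 ≤ v1)
    (hu : m ∣ (m - 2) * u0 + u1) (hv : m ∣ (m - 2) * v0 + v1) :
    (X 0 : MvPolynomial (Fin 2) ℂ) ^ (u0 + v0 - 1) * X 1 ^ (u1 + v1 - 1) ∈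
      Ideal.span ({X 0 * X 1, X 1 ^ 2, X 0 ^ ((m - 1) / 2) * X 1, X 0 ^ ((m + 1) / 2)} :
        Set (MvPolynomial (Fin 2) ℂ)) := by
  obtain ⟨t, ht⟩ := hodd
  apply powXX_mem m hm
  by_cases hf : 2 ≤ u1 + v1 - 1
  · exact Or.inl hf
  rcases (by omega : u1 + v1 = 1 ∨ u1 + v1 = 2) with h12 | h12
  · -- f = 0 : u1 = 0, v1 = 1
    right; right
    have hu1 : u1 = 0 := by omega
    have hdvd : m ∣ (m - 2) * u0 := by rw [hu1, Nat.add_zero] at hu; exact hu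
    have h2u : m ∣ 2 * u0 := by
      have hmul : m ∣ m * u0 := Dvd.intro u0 rfl
      have hsub := Nat.dvd_sub hmul hdvd
      have heq : m * u0 - (m - 2) * u0 = 2 * u0 := by
        rw [← Nat.sub_mul]
        congr 1
        omega
      rwa [heq] at hsub
    have hmdvd : m ∣ u0 := by
      have hcop : Nat.Coprime m 2 := Odd.coprime_two_right ⟨t, ht⟩
      exact hcop.dvd_of_dvd_mul_left h2u
    have hum : m ≤ u0 := Nat.le_of_dvd (by omega) hmdvd
    omega
  · -- f = 1
    by_cases he : 1 ≤ u0 + v0 - 1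
    · exact Or.inr (Or.inl ⟨he, by omega⟩)
    · exfalso
      have hv0 : v0 = 0 := by omega
      have hdvd : m ∣ v1 := by rw [hv0, Nat.mul_zero, Nat.zero_add] at hv; exact hv
      have := Nat.le_of_dvd (by omega) hdvd
      omega

private lemma term_mem (m : ℕ) (hm : 5 ≤ m) (hodd : Odd m)
    (u v : Fin 2 →₀ ℕ) (c1 c2 : ℂ)
    (hu : m ∣ (m - 2) * u 0 + u 1) (hv : m ∣ (m - 2) * v 0 + v 1) :
    (monomial ((u - Finsupp.single 0 1) + (v - Finsupp.single 1 1))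
        (c1 * (u 0 : ℂ) * (c2 * (v 1 : ℂ))) : MvPolynomial (Fin 2) ℂ) ∈
      Ideal.span ({X 0 * X 1, X 1 ^ 2, X 0 ^ ((m - 1) / 2) * X 1, X 0 ^ ((m + 1) / 2)} :
        Set (MvPolynomial (Fin 2) ℂ)) := by
  by_cases h0 : u 0 = 0
  · simp [h0]
  by_cases h1 : v 1 = 0
  · simp [h1]
  set w := (u - Finsupp.single 0 1) + (v - Finsupp.single 1 1) with hw
  have hw0 : w 0 = u 0 + v 0 - 1 := by
    simp only [hw, Finsupp.add_apply, Finsupp.tsub_apply, Finsupp.single_eq_same,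
      Finsupp.single_eq_of_ne' (by decide : (1 : Fin 2) ≠ 0)]
    omega
  have hw1 : w 1 = u 1 + v 1 - 1 := by
    simp only [hw, Finsupp.add_apply, Finsupp.tsub_apply, Finsupp.single_eq_same,
      Finsupp.single_eq_of_ne' (by decide : (0 : Fin 2) ≠ 1)]
    omega
  rw [mono2, hw0, hw1, mul_assoc]
  exact Ideal.mul_mem_left _ _
    (exp_mem m hm hodd (u 0) (u 1) (v 0) (v 1) (by omega) (by omega) hu hv)

/-- Case IC: for odd `m ≥ 5` and the `μ_m`-action on `ℂ[y₂, y₄]` with weights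
`(m-2, 1)`, for any two invariant polynomials `φ₁, φ₂`, the coefficient of
`dφ₁ ∧ dφ₂` against `dy₂ ∧ dy₄` (the Jacobian determinant) lies in the ideal
`(y₂, y₄)·y₄ + (y₂, y₄)·y₂^((m-1)/2)
  = (y₂ y₄, y₄², y₂^((m-1)/2) y₄, y₂^((m+1)/2))`.
Here `X 0 = y₂`, `X 1 = y₄`. -/
theorem stmt5 (m : ℕ) (hm : 5 ≤ m) (hodd : Odd m)
    (ζ : ℂ) (hζ : IsPrimitiveRoot ζ m)
    (φ1 φ2 : MvPolynomial (Fin 2) ℂ)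
    (h1 : MvPolynomial.aeval
        (fun i : Fin 2 =>
          (MvPolynomial.C (ζ ^ (if i = 0 then m - 2 else 1)) *
            MvPolynomial.X i : MvPolynomial (Fin 2) ℂ)) φ1 = φ1)
    (h2 : MvPolynomial.aeval
        (fun i : Fin 2 =>
          (MvPolynomial.C (ζ ^ (if i = 0 then m - 2 else 1)) *
            MvPolynomial.X i : MvPolynomial (Fin 2) ℂ)) φ2 = φ2) :
    MvPolynomial.pderiv 0 φ1 * MvPolynomial.pderiv 1 φ2 -
      MvPolynomial.pderiv 1 φ1 * MvPolynomial.pderiv 0 φ2 ∈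
    Ideal.span ({MvPolynomial.X 0 * MvPolynomial.X 1, MvPolynomial.X 1 ^ 2,
      MvPolynomial.X 0 ^ ((m - 1) / 2) * MvPolynomial.X 1,
      MvPolynomial.X 0 ^ ((m + 1) / 2)} : Set (MvPolynomial (Fin 2) ℂ)) := by
  have H1 : ∀ d ∈ φ1.support, m ∣ (m - 2) * d 0 + d 1 := support_dvd m ζ hζ φ1 h1
  have H2 : ∀ d ∈ φ2.support, m ∣ (m - 2) * d 0 + d 1 := support_dvd m ζ hζ φ2 h2
  have e1 := φ1.as_sum
  have e2 := φ2.as_sum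
  rw [e1, e2, map_sum, map_sum, map_sum, map_sum, Finset.sum_mul_sum, Finset.sum_mul_sum,
    ← Finset.sum_sub_distrib]
  simp only [← Finset.sum_sub_distrib]
  refine Ideal.sum_mem _ fun u hu => Ideal.sum_mem _ fun v hv => ?_
  rw [pderiv_monomial, pderiv_monomial, pderiv_monomial, pderiv_monomial,
    monomial_mul, monomial_mul]
  refine sub_mem (term_mem m hm hodd u v _ _ (H1 u hu) (H2 v hv)) ?_
  rw [add_comm (u - Finsupp.single 1 1) (v - Finsupp.single 0 1),
    show (coeff u φ1 * ((u 1 : ℕ) : ℂ) * (coeff v φ2 * ((v 0 : ℕ) : ℂ)))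
        = coeff v φ2 * ((v 0 : ℕ) : ℂ) * (coeff u φ1 * ((u 1 : ℕ) : ℂ)) from by ring]
  exact term_mem m hm hodd v u _ _ (H2 v hv) (H1 u hu)
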